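/- For every integer m ≥ 4 one has the ratio bounds θ_{m−1}/θ_{m−2} ≥ δ_{m−1} and δ_{m−1} > (((1−α)/(2α))·(m−3)) / ((m−1)/α − ((1−α)/(2α))(2α+1)), where in particular θ_{m−2} ≠ 0. -/

import Mathlib

/-- The sequence `θ_m`. -/
noncomputable def seqTheta (α : ℝ) : ℕ → ℝ
  | 0 => ((α + 1) / (2 * α)) ^ α
  | 1 => (α - 1) * (2 * α + 1) / (α + 1) * seqTheta α 0
  | (m + 2) =>
      2 * α / (((m : ℝ) + 2) * (1 + α)) *
        (((((m : ℝ) + 2) - 1) / α - (1 - α) / (2 * α) * (2 * α + 1)) * seqTheta α (m + 1) +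
          (1 - α) / (2 * α) * (3 - ((m : ℝ) + 2)) * seqTheta α m)

/-- `δ_m` from the paper. -/
noncomputable def deltaT (α : ℝ) (m : ℕ) : ℝ :=
  (1 - α) / (2 * α) * ((m : ℝ) - 2) /
      ((m : ℝ) / α - (1 - α) / (2 * α) * (2 * α + 1)) * (2 / (1 + α)) * (1 + 1 / (m : ℝ))

/- Auxiliary lemmas -/

lemma quintB {u : ℝ} (h0 : 0 ≤ u) (h1 : u ≤ 1) :
    0 ≤ 8-20*u+10*u^2+13*u^3-12*u^4+4*u^5 := by
  nlinarith [mul_nonneg (pow_nonneg h0 3) (sq_nonneg (2*u-3)),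
    mul_nonneg (sq_nonneg (u-7/10)) (by linarith : (0:ℝ) ≤ 2*u+39/5)]

lemma quintC {u : ℝ} (h0 : 0 ≤ u) (h1 : u ≤ 1) :
    0 ≤ 24-64*u+56*u^2+15*u^3-28*u^4+12*u^5 := by
  nlinarith [mul_nonneg (mul_nonneg (pow_nonneg h0 3) h0) (by linarith : (0:ℝ) ≤ 1-u),
    mul_nonneg (mul_nonneg h0 h0) (by linarith : (0:ℝ) ≤ 1-u),
    mul_nonneg (mul_nonneg (pow_nonneg h0 3) (mul_nonneg h0 h0)) h0,
    sq_nonneg (43*u-32), pow_nonneg h0 3]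

lemma keyPoly {α : ℝ} (h0 : 0 < α) (h1 : α < 1) {x : ℝ} (hx : 3 ≤ x) :
    4*(1-α)*(x-1)*(x+1)*(x+2)
      ≤ (2*x-(1-α)*(2*α+1))*(2*x+2-(1-α)*(2*α+1))*((1-α)*x+2) := by
  have hu0 : (0:ℝ) ≤ 1 - α := by linarith
  have hu1 : (1:ℝ) - α ≤ 1 := by linarith
  have hB := quintB hu0 hu1
  have hC := quintC hu0 hu1
  have hApos : (0:ℝ) ≤ 8-4*(1-α)-12*(1-α)^2+8*(1-α)^3 := by
    nlinarith [mul_nonneg (mul_nonneg h0.le h0.le) (by linarith : (0:ℝ) ≤ 3 - 2*α), h0.le]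
  have hA : (0:ℝ) ≤ (8-4*(1-α)-12*(1-α)^2+8*(1-α)^3) * ((x-3)*(x+3)) :=
    mul_nonneg hApos (by nlinarith)
  have hBx : (0:ℝ) ≤ (8-20*(1-α)+10*(1-α)^2+13*(1-α)^3-12*(1-α)^4+4*(1-α)^5) * (x-3) :=
    mul_nonneg hB (by linarith)
  nlinarith [hA, hBx, hC, hApos]

lemma Epos {α : ℝ} (h0 : 0 < α) (h1 : α < 1) {x : ℝ} (hx : 1 ≤ x) :
    0 < 2*x - (1-α)*(2*α+1) := by
  nlinarith [mul_pos h0 h0]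

lemma Dpos {α : ℝ} (h0 : 0 < α) (h1 : α < 1) {x : ℝ} (hx : 1 ≤ x) :
    0 < x / α - (1 - α) / (2 * α) * (2 * α + 1) := by
  have hE := Epos h0 h1 hx
  have heq : x / α - (1 - α) / (2 * α) * (2 * α + 1) = (2*x - (1-α)*(2*α+1)) / (2*α) := by
    field_simp
  rw [heq]; exact div_pos hE (by linarith)

lemma deltaEq {α : ℝ} (h0 : 0 < α) (h1 : α < 1) {x : ℝ} (hx : 1 ≤ x) :
    (1-α)/(2*α)*(x-2)/(x/α-(1-α)/(2*α)*(2*α+1))*(2/(1+α))*(1+1/x)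
      = 2*(1-α)*(x-2)*(x+1)/((2*x-(1-α)*(2*α+1))*(1+α)*x) := by
  have hE := (Epos h0 h1 hx).ne'
  have hx0 : x ≠ 0 := by linarith
  have h1α : (1:ℝ)+α ≠ 0 := by linarith
  have hα : α ≠ 0 := ne_of_gt h0
  have heq : x / α - (1 - α) / (2 * α) * (2 * α + 1) = (2*x - (1-α)*(2*α+1)) / (2*α) := by
    field_simp
  rw [heq]
  field_simp

lemma deltaPos {α : ℝ} (h0 : 0 < α) (h1 : α < 1) {x : ℝ} (hx : 3 ≤ x) :
    0 < (1-α)/(2*α)*(x-2)/(x/α-(1-α)/(2*α)*(2*α+1))*(2/(1+α))*(1+1/x) := by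
  rw [deltaEq h0 h1 (by linarith)]
  apply div_pos
  · nlinarith [mul_pos (mul_pos (by linarith : (0:ℝ) < 1-α) (by linarith : (0:ℝ) < x-2))
      (by linarith : (0:ℝ) < x+1)]
  · have hE := Epos h0 h1 (by linarith : (1:ℝ) ≤ x)
    nlinarith [mul_pos (mul_pos hE (by linarith : (0:ℝ) < 1+α)) (by linarith : (0:ℝ) < x)]

lemma thirdIneq {α : ℝ} (h0 : 0 < α) (h1 : α < 1) {x : ℝ} (hx : 3 ≤ x) :
    (1-α)/(2*α)*(x-2)/(x/α-(1-α)/(2*α)*(2*α+1))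
      < (1-α)/(2*α)*(x-2)/(x/α-(1-α)/(2*α)*(2*α+1))*(2/(1+α))*(1+1/x) := by
  have hD := Dpos h0 h1 (by linarith : (1:ℝ) ≤ x)
  have hbase : 0 < (1-α)/(2*α)*(x-2)/(x/α-(1-α)/(2*α)*(2*α+1)) := by
    apply div_pos
    · apply mul_pos (div_pos (by linarith) (by linarith)); linarith
    · exact hD
  have ha : 1 < 2/(1+α) := by
    rw [lt_div_iff₀ (by linarith : (0:ℝ) < 1+α)]; linarith
  have hb : 1 < 1+1/x := by
    have : 0 < 1/x := by positivity
    linarith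
  calc (1-α)/(2*α)*(x-2)/(x/α-(1-α)/(2*α)*(2*α+1))
      < (1-α)/(2*α)*(x-2)/(x/α-(1-α)/(2*α)*(2*α+1)) * ((2/(1+α))*(1+1/x)) := by
        apply lt_mul_of_one_lt_right hbase
        nlinarith [mul_pos (sub_pos.2 ha) (sub_pos.2 hb)]
    _ = (1-α)/(2*α)*(x-2)/(x/α-(1-α)/(2*α)*(2*α+1))*(2/(1+α))*(1+1/x) := by ring

lemma keyStep {α : ℝ} (h0 : 0 < α) (h1 : α < 1) {x : ℝ} (hx : 3 ≤ x) :
    (1-α)/(2*α)*(x+1-2)/((x+1)/α-(1-α)/(2*α)*(2*α+1))*(2/(1+α))*(1+1/(x+1))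
      ≤ 2*α/((x+1)*(1+α)) *
        ((x/α - (1-α)/(2*α)*(2*α+1))
          - (1-α)/(2*α)*(x-2) *
            ((1-α)/(2*α)*(x-2)/(x/α-(1-α)/(2*α)*(2*α+1))*(2/(1+α))*(1+1/x))⁻¹) := by
  have hE := Epos h0 h1 (by linarith : (1:ℝ) ≤ x)
  have hE1 : 0 < 2*(x+1) - (1-α)*(2*α+1) := Epos h0 h1 (by linarith)
  have hD := Dpos h0 h1 (by linarith : (1:ℝ) ≤ x)
  have hα : α ≠ 0 := ne_of_gt h0
  have h1α : (1:ℝ)+α ≠ 0 := by linarith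
  have hx0 : x ≠ 0 := by linarith
  have hx2 : x - 2 ≠ 0 := by linarith
  have hx1 : x + 1 ≠ 0 := by linarith
  have h1a : (1:ℝ)-α ≠ 0 := by linarith
  have hRHS : 2*α/((x+1)*(1+α)) *
        ((x/α - (1-α)/(2*α)*(2*α+1))
          - (1-α)/(2*α)*(x-2) *
            ((1-α)/(2*α)*(x-2)/(x/α-(1-α)/(2*α)*(2*α+1))*(2/(1+α))*(1+1/x))⁻¹)
      = (2*x-(1-α)*(2*α+1))*((1-α)*x+2)/(2*(1+α)*(x+1)^2) := by
    rw [deltaEq h0 h1 (by linarith : (1:ℝ) ≤ x)]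
    rw [show ((2*(1-α)*(x-2)*(x+1)/((2*x-(1-α)*(2*α+1))*(1+α)*x))⁻¹ :ℝ)
        = (2*x-(1-α)*(2*α+1))*(1+α)*x/(2*(1-α)*(x-2)*(x+1)) from by
      rw [inv_div]]
    have heq : x / α - (1 - α) / (2 * α) * (2 * α + 1) = (2*x - (1-α)*(2*α+1)) / (2*α) := by
      field_simp
    rw [heq]
    field_simp
    ring
  rw [hRHS]
  have hd1 : (1-α)/(2*α)*(x+1-2)/((x+1)/α-(1-α)/(2*α)*(2*α+1))*(2/(1+α))*(1+1/(x+1))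
      = 2*(1-α)*(x+1-2)*(x+1+1)/((2*(x+1)-(1-α)*(2*α+1))*(1+α)*(x+1)) :=
    deltaEq h0 h1 (by linarith)
  rw [hd1]
  have hpos1 : 0 < (2*(x+1)-(1-α)*(2*α+1))*(1+α)*(x+1) := by
    have h1' : (0:ℝ) < 1+α := by linarith
    have h2' : (0:ℝ) < x+1 := by linarith
    nlinarith [mul_pos (mul_pos hE1 h1') h2']
  have hpos2 : 0 < 2*(1+α)*(x+1)^2 := by
    have h1' : (0:ℝ) < 1+α := by linarith
    have h2' : (0:ℝ) < x+1 := by linarith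
    nlinarith [mul_pos h1' (mul_pos h2' h2')]
  have hpos3 : (0:ℝ) ≤ (1+α)*(x+1) := by nlinarith
  rw [div_le_div_iff₀ hpos1 hpos2]
  nlinarith [mul_le_mul_of_nonneg_right (keyPoly h0 h1 hx) hpos3]

lemma theta2Eq {α : ℝ} (h0 : 0 < α) (h1 : α < 1) :
    seqTheta α 2 = -(2*α^3*(1-α)/(1+α)^2) * seqTheta α 0 := by
  have h2 := seqTheta.eq_3 α 0
  norm_num at h2
  rw [h2, seqTheta.eq_2]
  have hα : α ≠ 0 := ne_of_gt h0
  have h1α : (1:ℝ) + α ≠ 0 := by linarith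
  have hα1 : α + 1 ≠ 0 := by linarith
  generalize seqTheta α 0 = t0
  field_simp
  ring

lemma theta3Eq {α : ℝ} (h0 : 0 < α) (h1 : α < 1) :
    seqTheta α 3 = (2*α^2 - α + 3)/(3*(1+α)) * seqTheta α 2 := by
  have h3 := seqTheta.eq_3 α 1
  norm_num at h3
  rw [h3]
  have hα : α ≠ 0 := ne_of_gt h0
  have h1α : (1:ℝ) + α ≠ 0 := by linarith
  generalize seqTheta α 2 = t2
  field_simp
  ring

lemma thetaRec {α : ℝ} (n : ℕ) :
    seqTheta α (n+4) = 2*α/(((n:ℝ)+3+1)*(1+α)) *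
      ((((n:ℝ)+3)/α - (1-α)/(2*α)*(2*α+1)) * seqTheta α (n+3)
        - (1-α)/(2*α)*((n:ℝ)+3-2) * seqTheta α (n+2)) := by
  have h := seqTheta.eq_3 α (n+2)
  push_cast at h
  rw [show (n+2).succ.succ = n+4 from rfl, show n+2+1 = n+3 from rfl] at h
  rw [h]
  ring

lemma mainInd {α : ℝ} (h0 : 0 < α) (h1 : α < 1) :
    ∀ n : ℕ, seqTheta α (n+2) ≠ 0 ∧
      deltaT α (n+3) ≤ seqTheta α (n+3) / seqTheta α (n+2) := by
  have hα : α ≠ 0 := ne_of_gt h0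
  have h1α : (1:ℝ) + α ≠ 0 := by linarith
  have ht0 : 0 < seqTheta α 0 := by
    rw [seqTheta.eq_1]
    exact Real.rpow_pos_of_pos (div_pos (by linarith) (by linarith)) α
  have hθ2neg : seqTheta α 2 < 0 := by
    rw [theta2Eq h0 h1]
    have hc : 0 < 2*α^3*(1-α)/(1+α)^2 := by
      apply div_pos
      · have : 0 < α^3 := by positivity
        nlinarith
      · positivity
    nlinarith
  have hθ2 : seqTheta α 2 ≠ 0 := ne_of_lt hθ2neg
  intro n
  induction n with
  | zero =>
    refine ⟨hθ2, ?_⟩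
    have hr3 : seqTheta α 3 / seqTheta α 2 = (2*α^2 - α + 3)/(3*(1+α)) := by
      rw [theta3Eq h0 h1, mul_div_assoc, div_self hθ2, mul_one]
    have hd3 : deltaT α 3
        = (1-α)/(2*α)*((3:ℝ)-2)/((3:ℝ)/α-(1-α)/(2*α)*(2*α+1))*(2/(1+α))*(1+1/(3:ℝ)) := by
      unfold deltaT; norm_num
    rw [hr3, hd3, deltaEq h0 h1 (by norm_num : (1:ℝ) ≤ 3)]
    have hE := Epos h0 h1 (by norm_num : (1:ℝ) ≤ (3:ℝ))
    rw [div_le_div_iff₀ (by nlinarith) (by nlinarith)]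
    nlinarith [sq_nonneg (4*α-1), sq_nonneg α, mul_pos h0 h0,
      mul_nonneg (mul_nonneg h0.le h0.le) h0.le,
      mul_nonneg (mul_nonneg (mul_nonneg h0.le h0.le) h0.le) h0.le]
  | succ n ih =>
    obtain ⟨hne, hr⟩ := ih
    have hx : (3:ℝ) ≤ (n:ℝ)+3 := by
      have : (0:ℝ) ≤ (n:ℝ) := Nat.cast_nonneg n
      linarith
    have hd3 : deltaT α (n+3)
        = (1-α)/(2*α)*(((n:ℝ)+3)-2)/(((n:ℝ)+3)/α-(1-α)/(2*α)*(2*α+1))*(2/(1+α))*(1+1/((n:ℝ)+3)) := by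
      unfold deltaT; push_cast; ring
    have hd4 : deltaT α (n+1+3)
        = (1-α)/(2*α)*(((n:ℝ)+3)+1-2)/((((n:ℝ)+3)+1)/α-(1-α)/(2*α)*(2*α+1))*(2/(1+α))*(1+1/(((n:ℝ)+3)+1)) := by
      unfold deltaT; push_cast; ring
    have hδpos : 0 < deltaT α (n+3) := by
      rw [hd3]; exact deltaPos h0 h1 hx
    have hrpos : 0 < seqTheta α (n+3) / seqTheta α (n+2) := lt_of_lt_of_le hδpos hr
    have hθ3 : seqTheta α (n+3) ≠ 0 := by
      intro h
      rw [h, zero_div] at hrpos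
      exact lt_irrefl _ hrpos
    refine ⟨hθ3, ?_⟩
    have hratio : seqTheta α (n+1+3) / seqTheta α (n+3)
        = 2*α/((((n:ℝ)+3)+1)*(1+α)) *
          (((((n:ℝ)+3))/α - (1-α)/(2*α)*(2*α+1))
            - (1-α)/(2*α)*(((n:ℝ)+3)-2) * (seqTheta α (n+3) / seqTheta α (n+2))⁻¹) := by
      rw [show n+1+3 = n+4 from rfl, thetaRec n, inv_div]
      have hn4 : ((n:ℝ)+3+1) ≠ 0 := by linarith
      field_simp
    have hBnn : 0 ≤ (1-α)/(2*α)*(((n:ℝ)+3)-2) := by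
      apply mul_nonneg
      · apply div_nonneg <;> linarith
      · linarith
    have hinv : (seqTheta α (n+3) / seqTheta α (n+2))⁻¹ ≤ (deltaT α (n+3))⁻¹ :=
      inv_anti₀ hδpos hr
    have hcpos : (0:ℝ) < 2*α/((((n:ℝ)+3)+1)*(1+α)) := by
      apply div_pos (by linarith)
      have : (0:ℝ) < (n:ℝ)+3+1 := by linarith
      nlinarith
    have hstep : 2*α/((((n:ℝ)+3)+1)*(1+α)) *
          (((((n:ℝ)+3))/α - (1-α)/(2*α)*(2*α+1))
            - (1-α)/(2*α)*(((n:ℝ)+3)-2) * (deltaT α (n+3))⁻¹)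
        ≤ seqTheta α (n+1+3) / seqTheta α (n+3) := by
      rw [hratio]
      apply mul_le_mul_of_nonneg_left _ hcpos.le
      have := mul_le_mul_of_nonneg_left hinv hBnn
      linarith
    have hks := keyStep h0 h1 hx
    rw [← hd3] at hks
    calc deltaT α (n+1+3)
        = (1-α)/(2*α)*(((n:ℝ)+3)+1-2)/((((n:ℝ)+3)+1)/α-(1-α)/(2*α)*(2*α+1))*(2/(1+α))*(1+1/(((n:ℝ)+3)+1)) := hd4
      _ ≤ 2*α/((((n:ℝ)+3)+1)*(1+α)) *
          (((((n:ℝ)+3))/α - (1-α)/(2*α)*(2*α+1))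
            - (1-α)/(2*α)*(((n:ℝ)+3)-2) * (deltaT α (n+3))⁻¹) := hks
      _ ≤ seqTheta α (n+1+3) / seqTheta α (n+3) := hstep

theorem seqTheta_ratio_bounds (α : ℝ) (hα : α ∈ Set.Ioo (0 : ℝ) 1) :
    ∀ m : ℕ, 4 ≤ m →
      seqTheta α (m - 2) ≠ 0 ∧
      deltaT α (m - 1) ≤ seqTheta α (m - 1) / seqTheta α (m - 2) ∧
      (1 - α) / (2 * α) * ((m : ℝ) - 3) /
          (((m : ℝ) - 1) / α - (1 - α) / (2 * α) * (2 * α + 1)) < deltaT α (m - 1) := by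
  obtain ⟨h0, h1⟩ := hα
  intro m hm
  obtain ⟨n, rfl⟩ : ∃ n, m = n + 4 := ⟨m - 4, by omega⟩
  rw [show n+4-2 = n+2 from by omega, show n+4-1 = n+3 from by omega]
  obtain ⟨hne, hr⟩ := mainInd h0 h1 n
  refine ⟨hne, hr, ?_⟩
  have hx : (3:ℝ) ≤ (n:ℝ)+3 := by
    have : (0:ℝ) ≤ (n:ℝ) := Nat.cast_nonneg n
    linarith
  have hd3 : deltaT α (n+3)
      = (1-α)/(2*α)*(((n:ℝ)+3)-2)/(((n:ℝ)+3)/α-(1-α)/(2*α)*(2*α+1))*(2/(1+α))*(1+1/((n:ℝ)+3)) := by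
    unfold deltaT; push_cast; ring
  have hL : (1 - α) / (2 * α) * (((n+4:ℕ) : ℝ) - 3) /
        ((((n+4:ℕ) : ℝ) - 1) / α - (1 - α) / (2 * α) * (2 * α + 1))
      = (1-α)/(2*α)*(((n:ℝ)+3)-2)/(((n:ℝ)+3)/α-(1-α)/(2*α)*(2*α+1)) := by
    push_cast; ring
  rw [hL, hd3]
  exact thirdIneq h0 h1 hx
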